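/- Let β ≥ 1 and 1/2 ≤ r ≤ 1. Let E, D be independent Bernoulli variables with P(E=1)=1−r and P(D=1)=r. For any event M: (β·P(M=1,E=1) + P(M=2,E=2))/β + (P(M=1,D=1) + β·P(M=2,D=2))/β ≤ (1−r) + r/β + (1 + 1/β)·r(1−r). -/

import Mathlib

open MeasureTheory

/-- Bound C_e/β + C_d/β in the GBM analysis. -/
theorem gbm_bound_Ce_Cd {Ω : Type*} [MeasurableSpace Ω]
    (μ : Measure Ω) [IsProbabilityMeasure μ]
    (β r : ℝ) (hβ : 1 ≤ β) (hr : 1/2 ≤ r) (hr1 : r ≤ 1)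
    (M E D : Set Ω) (hM : MeasurableSet M) (hE : MeasurableSet E)
    (hD : MeasurableSet D)
    (hPE : (μ E).toReal = 1 - r) (hPD : (μ D).toReal = r)
    (hind : μ (E ∩ D) = μ E * μ D) :
    (β * (μ (M ∩ E)).toReal + (μ (Mᶜ ∩ Eᶜ)).toReal) / β
        + ((μ (M ∩ D)).toReal + β * (μ (Mᶜ ∩ Dᶜ)).toReal) / β
      ≤ (1 - r) + r / β + (1 + 1/β) * (r * (1 - r)) := by
  have hβ0 : (0:ℝ) < β := lt_of_lt_of_le one_pos hβ
  have hfin : ∀ s : Set Ω, μ s ≠ ⊤ := fun s => measure_ne_top μ s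
  -- value of μ (E ∩ D)
  have hED : (μ (E ∩ D)).toReal = (1 - r) * r := by
    rw [hind, ENNReal.toReal_mul, hPE, hPD]
  -- μ (E ∩ D) + μ (D \ E) = μ D
  have hDsplit : (μ (D \ E)).toReal = r - (1 - r) * r := by
    have h := measure_inter_add_diff (μ := μ) D hE
    have h' : (μ (D ∩ E)).toReal + (μ (D \ E)).toReal = (μ D).toReal := by
      rw [← ENNReal.toReal_add (hfin _) (hfin _), h]
    rw [Set.inter_comm] at h'
    rw [hED, hPD] at h'
    linarith
  have hEsplit : (μ (E \ D)).toReal = (1 - r) - (1 - r) * r := by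
    have h := measure_inter_add_diff (μ := μ) E hD
    have h' : (μ (E ∩ D)).toReal + (μ (E \ D)).toReal = (μ E).toReal := by
      rw [← ENNReal.toReal_add (hfin _) (hfin _), h]
    rw [hED, hPE] at h'
    linarith
  -- key1 : a + d ≤ (1 - r) + r * (1 - r)
  have key : ∀ (A B : Set Ω), MeasurableSet A → MeasurableSet B →
      (μ (M ∩ A)).toReal + (μ (Mᶜ ∩ B)).toReal ≤ 1 - (μ (Aᶜ ∩ Bᶜ)).toReal := by
    intro A B hA hB
    have hdisj : Disjoint (M ∩ A) (Mᶜ ∩ B) :=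
      Set.disjoint_left.mpr (fun x hx hx' => hx'.1 hx.1)
    have hsub : (M ∩ A) ∪ (Mᶜ ∩ B) ⊆ A ∪ B := by
      rintro x (⟨_, hx⟩ | ⟨_, hx⟩); exacts [Or.inl hx, Or.inr hx]
    have h1 : μ (M ∩ A) + μ (Mᶜ ∩ B) ≤ μ (A ∪ B) := by
      rw [← measure_union hdisj (hM.compl.inter hB)]
      exact measure_mono hsub
    have h2 : μ (A ∪ B) + μ (Aᶜ ∩ Bᶜ) = 1 := by
      have : Aᶜ ∩ Bᶜ = (A ∪ B)ᶜ := by rw [Set.compl_union]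
      rw [this, measure_add_measure_compl (hA.union hB)]; exact measure_univ
    have h1' : (μ (M ∩ A)).toReal + (μ (Mᶜ ∩ B)).toReal ≤ (μ (A ∪ B)).toReal := by
      rw [← ENNReal.toReal_add (hfin _) (hfin _)]
      exact ENNReal.toReal_mono (hfin _) h1
    have h2' : (μ (A ∪ B)).toReal + (μ (Aᶜ ∩ Bᶜ)).toReal = 1 := by
      rw [← ENNReal.toReal_add (hfin _) (hfin _), h2]; simp
    linarith
  have key1 : (μ (M ∩ E)).toReal + (μ (Mᶜ ∩ Dᶜ)).toReal ≤ (1 - r) + r * (1 - r) := by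
    have h := key E Dᶜ hE hD.compl
    have hEq : (Eᶜ ∩ Dᶜᶜ) = D \ E := by
      ext x; simp [Set.mem_diff, and_comm]
    rw [hEq, hDsplit] at h
    linarith [h]
  have key2 : (μ (Mᶜ ∩ Eᶜ)).toReal + (μ (M ∩ D)).toReal ≤ r + r * (1 - r) := by
    have h := key D Eᶜ hD hE.compl
    have hEq : (Dᶜ ∩ Eᶜᶜ) = E \ D := by
      ext x; simp [Set.mem_diff, and_comm]
    rw [hEq, hEsplit] at h
    linarith [h]
  have ha := ENNReal.toReal_nonneg (a := μ (M ∩ E))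
  have hb := ENNReal.toReal_nonneg (a := μ (Mᶜ ∩ Eᶜ))
  have hc := ENNReal.toReal_nonneg (a := μ (M ∩ D))
  have hd := ENNReal.toReal_nonneg (a := μ (Mᶜ ∩ Dᶜ))
  rw [← add_div, div_le_iff₀ hβ0]
  have hkey1 := mul_le_mul_of_nonneg_left key1 hβ0.le
  have hexp : ((1 - r) + r / β + (1 + 1/β) * (r * (1 - r))) * β
      = (1 - r) * β + r + (β + 1) * (r * (1 - r)) := by
    field_simp
  rw [hexp]
  nlinarith [key2, hkey1]
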